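/- Let b > 2 be an integer and d a digit with 0 < d < b. Then b·log(b) + ψ(d/b) − ψ(1) < K(b,{d}) < b·log(b) + ψ((d+1)/b) − ψ(1). -/

import Mathlib

open MeasureTheory Real ENNReal

/-- The digamma function `ψ(x) = d/dx log Γ(x)`. -/
noncomputable def digamma (x : ℝ) : ℝ := deriv (fun y => Real.log (Real.Gamma y)) x

/-- The Kempner sum `K(b,E)`: sum of reciprocals of positive integers whose
base-`b` digits all avoid the excluded set `E`. -/
noncomputable def kempnerSum (b : ℕ) (E : Finset ℕ) : ℝ :=
  ∑' n : ℕ, if n ≠ 0 ∧ ∀ d ∈ Nat.digits b n, d ∉ E then (n : ℝ)⁻¹ else 0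

/-- The measure `μ_{b,E}` on `[0,1)`: the sum, over all finite strings of admissible
digits (digits `< b` not in `E`), of the weighted Dirac mass `b^{-l} δ_{n(X)/b^l}`. -/
noncomputable def kempnerMeasure (b : ℕ) (E : Finset ℕ) : Measure ℝ :=
  Measure.sum (fun X : {l : List ℕ // ∀ d ∈ l, d < b ∧ d ∉ E} =>
    ((b : ℝ≥0∞) ^ X.1.length)⁻¹ •
      Measure.dirac (((Nat.ofDigits b X.1 : ℕ) : ℝ) / (b : ℝ) ^ X.1.length))

/-- `E₁ = E` if `0 ∉ E`, and `E₁ = (E ∪ {b}) \ {0}` if `0 ∈ E`. -/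
def Eone (b : ℕ) (E : Finset ℕ) : Finset ℕ :=
  if 0 ∈ E then insert b (E.erase 0) else E

/-- `ζ(s) = ∑_{k ≥ 1} k⁻ˢ`. -/
noncomputable def zetaVal (s : ℕ) : ℝ := ∑' k : ℕ, (((k : ℝ) + 1) ^ s)⁻¹

/-- `v_m(d) = ∫_{[0,1)} (d - x)^m dμ_{b,E}(x)`. -/
noncomputable def vMoment (b : ℕ) (E : Finset ℕ) (m : ℕ) (d : ℝ) : ℝ :=
  ∫ x in Set.Ico (0 : ℝ) 1, (d - x) ^ m ∂(kempnerMeasure b E)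


open Filter Topology Finset

namespace KP

lemma diffAt (x : ℝ) (hx : 0 < x) :
    DifferentiableAt ℝ (fun y => Real.log (Real.Gamma y)) x := by
  have : DifferentiableAt ℝ (Real.log ∘ Real.Gamma) x := by
    refine ((Real.differentiableAt_Gamma ?_).log (Real.Gamma_ne_zero ?_)) <;>
      exact fun m => ne_of_gt (lt_of_le_of_lt (neg_nonpos.mpr (Nat.cast_nonneg m)) hx)
  simpa [Function.comp_def] using this

lemma digamma_eq (x : ℝ) : digamma x = deriv (Real.log ∘ Real.Gamma) x := by
  simp [digamma, Function.comp_def]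

lemma digamma_rec {x : ℝ} (hx : 0 < x) : digamma (x + 1) = digamma x + 1 / x := by
  have h_rec : ∀ y : ℝ, 0 < y → (Real.log ∘ Real.Gamma) (y + 1)
      = (Real.log ∘ Real.Gamma) y + Real.log y := by
    intro y hy
    simp only [Function.comp_apply, Real.Gamma_add_one hy.ne',
      Real.log_mul hy.ne' (Real.Gamma_pos_of_pos hy).ne', add_comm]
  rw [digamma_eq, digamma_eq]
  rw [← deriv_comp_add_const, one_div, ← Real.deriv_log,
    ← deriv_add ((by simpa [Function.comp_def] using diffAt x hx)) (Real.differentiableAt_log hx.ne')]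
  apply Filter.EventuallyEq.deriv_eq
  filter_upwards [eventually_gt_nhds hx] with y hy
  simpa using h_rec y hy

lemma digamma_le_log {x : ℝ} (hx : 0 < x) : digamma x ≤ Real.log x := by
  have hc := Real.convexOn_log_Gamma
  have h := hc.deriv_le_slope (Set.mem_Ioi.mpr hx) (Set.mem_Ioi.mpr (by linarith : (0:ℝ) < x + 1))
    (by linarith) (by simpa [Function.comp_def] using diffAt x hx)
  rw [slope_def_field] at h
  have hgam : (Real.log ∘ Real.Gamma) (x + 1) = (Real.log ∘ Real.Gamma) x + Real.log x := by
    simp only [Function.comp_apply, Real.Gamma_add_one hx.ne',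
      Real.log_mul hx.ne' (Real.Gamma_pos_of_pos hx).ne', add_comm]
  rw [digamma_eq]
  calc deriv (Real.log ∘ Real.Gamma) x ≤ _ := h
  _ = Real.log x := by rw [hgam]; ring

lemma log_le_digamma_succ {x : ℝ} (hx : 0 < x) : Real.log x ≤ digamma (x + 1) := by
  have hc := Real.convexOn_log_Gamma
  have h := hc.slope_le_deriv (Set.mem_Ioi.mpr hx) (Set.mem_Ioi.mpr (by linarith : (0:ℝ) < x + 1))
    (by linarith) (by simpa [Function.comp_def] using diffAt (x+1) (by linarith))
  rw [slope_def_field] at h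
  have hgam : (Real.log ∘ Real.Gamma) (x + 1) = (Real.log ∘ Real.Gamma) x + Real.log x := by
    simp only [Function.comp_apply, Real.Gamma_add_one hx.ne',
      Real.log_mul hx.ne' (Real.Gamma_pos_of_pos hx).ne', add_comm]
  rw [digamma_eq]
  refine le_trans (le_of_eq ?_) h
  rw [hgam]; ring

lemma digamma_mono {x y : ℝ} (hx : 0 < x) (hxy : x ≤ y) : digamma x ≤ digamma y := by
  rcases eq_or_lt_of_le hxy with rfl | h
  · rfl
  have hc := Real.convexOn_log_Gamma
  have hy : 0 < y := lt_trans hx h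
  have h1 := hc.deriv_le_slope (Set.mem_Ioi.mpr hx) (Set.mem_Ioi.mpr hy) h
    (by simpa [Function.comp_def] using diffAt x hx)
  have h2 := hc.slope_le_deriv (Set.mem_Ioi.mpr hx) (Set.mem_Ioi.mpr hy) h
    (by simpa [Function.comp_def] using diffAt y hy)
  rw [digamma_eq, digamma_eq]
  exact le_trans h1 h2

lemma digamma_strictMono {x y : ℝ} (hx : 0 < x) (hxy : x < y) : digamma x < digamma y := by
  rcases lt_or_ge (digamma x) (digamma y) with h | h
  · exact h
  exfalso
  have heq : digamma x = digamma y := le_antisymm (digamma_mono hx hxy.le) h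
  have hy : 0 < y := lt_trans hx hxy
  have h1 : digamma (x + 1) = digamma x + 1 / x := digamma_rec hx
  have h2 : digamma (y + 1) = digamma y + 1 / y := digamma_rec hy
  have h3 : digamma (x + 1) ≤ digamma (y + 1) := digamma_mono (by linarith) (by linarith)
  have h4 : 1 / y < 1 / x := by
    apply div_lt_div_of_pos_left one_pos hx hxy
  linarith

lemma digamma_mult {b : ℕ} (hb : 0 < b) {y : ℝ} (hy : 0 < y) :
    ∑ j ∈ Finset.range b, digamma ((y + j)/b) = b * digamma y - b * Real.log b := by
  have hbR : (0:ℝ) < b := by exact_mod_cast hb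
  set M : ℝ → ℝ := fun z => (∑ j ∈ Finset.range b, digamma ((z + j)/b)) - b * digamma z with hM
  have hM1 : ∀ z : ℝ, 0 < z → M (z + 1) = M z := by
    intro z hz
    have hzb : 0 < z / b := div_pos hz hbR
    have e1 : ∑ j ∈ Finset.range b, digamma ((z + 1 + j)/b)
        = ∑ j ∈ Finset.range b, digamma ((z + ((j:ℕ)+1:ℕ))/b) := by
      apply Finset.sum_congr rfl; intro j _; congr 2; push_cast; ring
    have e2 : ∑ j ∈ Finset.range b, digamma ((z + ((j:ℕ)+1:ℕ))/b)
        = (∑ j ∈ Finset.range b, digamma ((z + j)/b)) + digamma ((z + b)/b) - digamma ((z + (0:ℕ))/b) := by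
      have h := Finset.sum_range_succ' (fun j : ℕ => digamma ((z + j)/b)) b
      have h2 := Finset.sum_range_succ (fun j : ℕ => digamma ((z + j)/b)) b
      rw [h2] at h
      linarith [h]
    have e3 : digamma ((z + b)/b) = digamma (z/b) + b / z := by
      have h4 : (z + b)/b = z/b + 1 := by field_simp
      rw [h4, digamma_rec hzb, one_div_div]
    have e4 : digamma ((z + (0:ℕ))/b) = digamma (z/b) := by norm_num
    have e5 : digamma (z + 1) = digamma z + 1 / z := digamma_rec hz
    simp only [hM, e1, e2, e3, e4, e5]
    field_simp
    ring
  have hMn : ∀ n : ℕ, M (y + n) = M y := by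
    intro n; induction n with
    | zero => norm_num
    | succ n ih =>
      have h5 : y + ((n:ℝ)+1) = (y + n) + 1 := by ring
      push_cast
      rw [h5, hM1 _ (by positivity), ih]
  have hup : ∀ᶠ n : ℕ in atTop, M y ≤ (∑ j ∈ Finset.range b, (Real.log (y + n + j) - Real.log (y + n - 1))) - b * Real.log b := by
    filter_upwards [eventually_ge_atTop (b + 2)] with n hn
    have hzb : (b:ℝ) + 2 ≤ (n:ℝ) := by exact_mod_cast hn
    have hz1 : (b:ℝ) + 1 < y + n := by linarith
    have h1 : ∀ j ∈ Finset.range b, digamma ((y + n + j)/b) ≤ Real.log (y + n + j) - Real.log b := by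
      intro j hj
      have hpos : (0:ℝ) < (y + n + j)/b := by positivity
      have h6 := digamma_le_log hpos
      rwa [Real.log_div (by positivity) (by positivity)] at h6
    have h2 : Real.log (y + n - 1) ≤ digamma (y + n) := by
      have h3 := log_le_digamma_succ (x := y + n - 1) (by linarith)
      have h7 : y + n - 1 + 1 = y + n := by ring
      rwa [h7] at h3
    have hS : ∑ j ∈ Finset.range b, digamma ((y + n + j)/b)
        ≤ ∑ j ∈ Finset.range b, (Real.log (y + n + j) - Real.log b) := Finset.sum_le_sum h1
    have hC : ∑ j ∈ Finset.range b, (Real.log (y + n + j) - Real.log b)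
        = (∑ j ∈ Finset.range b, (Real.log (y + n + j) - Real.log (y + n - 1))) - b * Real.log b + b * Real.log (y + n - 1) := by
      rw [Finset.sum_sub_distrib, Finset.sum_sub_distrib, Finset.sum_const, Finset.sum_const, card_range]
      simp only [nsmul_eq_mul]; ring
    have h8 := mul_le_mul_of_nonneg_left h2 hbR.le
    have h9 : M y = M (y + n) := (hMn n).symm
    rw [h9]
    simp only [hM]
    linarith [hS.trans_eq hC]
  have hlo : ∀ᶠ n : ℕ in atTop, (∑ j ∈ Finset.range b, (Real.log (y + n + j - b) - Real.log (y + n))) - b * Real.log b ≤ M y := by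
    filter_upwards [eventually_ge_atTop (b + 2)] with n hn
    have hzb : (b:ℝ) + 2 ≤ (n:ℝ) := by exact_mod_cast hn
    have hz1 : (b:ℝ) + 1 < y + n := by linarith
    have h1 : ∀ j ∈ Finset.range b, Real.log (y + n + j - b) - Real.log b ≤ digamma ((y + n + j)/b) := by
      intro j hj
      have hjb : (0:ℝ) < (y + n + j - b)/b := by
        apply div_pos _ hbR
        linarith [Nat.cast_nonneg (α := ℝ) j]
      have h3 := log_le_digamma_succ hjb
      have h4 : (y + n + j - b)/b + 1 = (y + n + j)/b := by field_simp; ring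
      rw [h4] at h3
      rwa [Real.log_div (by linarith [Nat.cast_nonneg (α := ℝ) j, (div_pos_iff.mp hjb)]) (by positivity)] at h3
    have h2 : digamma (y + n) ≤ Real.log (y + n) := digamma_le_log (by linarith)
    have hS : ∑ j ∈ Finset.range b, (Real.log (y + n + j - b) - Real.log b)
        ≤ ∑ j ∈ Finset.range b, digamma ((y + n + j)/b) := Finset.sum_le_sum h1
    have hC : ∑ j ∈ Finset.range b, (Real.log (y + n + j - b) - Real.log b)
        = (∑ j ∈ Finset.range b, (Real.log (y + n + j - b) - Real.log (y + n))) - b * Real.log b + b * Real.log (y + n) := by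
      rw [Finset.sum_sub_distrib, Finset.sum_sub_distrib, Finset.sum_const, Finset.sum_const, card_range]
      simp only [nsmul_eq_mul]; ring
    have h8 := mul_le_mul_of_nonneg_left h2 hbR.le
    have h9 : M y = M (y + n) := (hMn n).symm
    rw [h9]
    simp only [hM]
    linarith [hC ▸ hS]
  have hU : Tendsto (fun n : ℕ => ∑ j ∈ Finset.range b, (Real.log (y + n + j) - Real.log (y + n - 1))) atTop (𝓝 0) := by
    have h10 : ∀ j ∈ Finset.range b, Tendsto (fun n : ℕ => Real.log (y + n + j) - Real.log (y + n - 1)) atTop (𝓝 0) := by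
      intro j _
      have base := Real.tendsto_log_comp_add_sub_log ((j:ℝ) + 1)
      have hcomp : Tendsto (fun n : ℕ => y - 1 + (n:ℝ)) atTop atTop :=
        tendsto_atTop_add_const_left _ _ tendsto_natCast_atTop_atTop
      have := base.comp hcomp
      apply this.congr
      intro n
      simp only [Function.comp_apply]
      rw [show y - 1 + (n:ℝ) + ((j:ℝ) + 1) = y + n + j by ring, show y - 1 + (n:ℝ) = y + n - 1 by ring]
    have := tendsto_finset_sum (Finset.range b) h10
    simpa using this
  have hL : Tendsto (fun n : ℕ => ∑ j ∈ Finset.range b, (Real.log (y + n + j - b) - Real.log (y + n))) atTop (𝓝 0) := by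
    have h10 : ∀ j ∈ Finset.range b, Tendsto (fun n : ℕ => Real.log (y + n + j - b) - Real.log (y + n)) atTop (𝓝 0) := by
      intro j _
      have base := Real.tendsto_log_comp_add_sub_log ((j:ℝ) - b)
      have hcomp : Tendsto (fun n : ℕ => y + (n:ℝ)) atTop atTop :=
        tendsto_atTop_add_const_left _ _ tendsto_natCast_atTop_atTop
      have := base.comp hcomp
      apply this.congr
      intro n
      simp only [Function.comp_apply]
      rw [show y + (n:ℝ) + ((j:ℝ) - b) = y + n + j - b by ring]
    have := tendsto_finset_sum (Finset.range b) h10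
    simpa using this
  have hMy1 : M y ≤ -(b * Real.log b) := by
    refine ge_of_tendsto ?_ hup
    have := hU.sub_const ((b:ℝ) * Real.log b)
    simpa using this
  have hMy2 : -(b * Real.log b) ≤ M y := by
    refine le_of_tendsto ?_ hlo
    have := hL.sub_const ((b:ℝ) * Real.log b)
    simpa using this
  have : M y = -(b * Real.log b) := le_antisymm hMy1 hMy2
  simp only [hM] at this
  linarith

lemma digamma_shift {x : ℝ} (hx : 0 < x) (n : ℕ) :
    digamma (x + n) = digamma x + ∑ k ∈ Finset.range n, 1/(x + k) := by
  induction n with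
  | zero => simp
  | succ n ih =>
    have h1 : x + ((n:ℕ)+1:ℕ) = (x + n) + 1 := by push_cast; ring
    rw [h1, digamma_rec (by positivity), ih, Finset.sum_range_succ]
    push_cast; ring

lemma key_pointwise {b d : ℕ} (hb : 2 < b) (hd0 : 0 < d) (hdb : d < b)
    {x : ℝ} (hx : 0 ≤ x) :
    ∑ a ∈ ((Finset.range b).erase d).erase 0, ((a:ℝ) + x)⁻¹
    = -digamma (x+1) + (1/b) * ∑ j ∈ (Finset.range b).erase d, digamma ((x + j)/b + 1)
      + Real.log b + (1/b) * digamma (((d:ℝ) + x)/b) := by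
  have hbR : (0:ℝ) < b := by positivity
  have hdR : (0:ℝ) < d := by exact_mod_cast hd0
  have hxd : (0:ℝ) < x + d := by linarith
  have E1 : ∑ j ∈ Finset.range b, digamma ((x + j)/b + 1)
      = b * digamma (x + b) - b * Real.log b := by
    rw [← digamma_mult (by omega : 0 < b) (by linarith : (0:ℝ) < x + b)]
    apply Finset.sum_congr rfl
    intro j _
    congr 1
    field_simp
    ring
  have hdmem : d ∈ Finset.range b := Finset.mem_range.mpr hdb
  have E1' : ∑ j ∈ (Finset.range b).erase d, digamma ((x + j)/b + 1)
      = (b * digamma (x + b) - b * Real.log b) - digamma ((x + d)/b + 1) := by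
    rw [← E1, eq_sub_iff_add_eq, Finset.sum_erase_add _ _ hdmem]
  have E2 : digamma ((x + d)/b + 1) = digamma ((x + d)/b) + b/(x + d) := by
    rw [digamma_rec (by positivity), one_div_div]
  have E3 : digamma (x + b) = digamma (x + 1) + ∑ k ∈ Finset.range (b-1), 1/(x + 1 + k) := by
    have h1 := digamma_shift (x := x + 1) (by linarith) (b - 1)
    have h2 : x + 1 + ((b-1:ℕ):ℝ) = x + b := by
      have : ((b-1:ℕ):ℝ) = (b:ℝ) - 1 := by
        push_cast [Nat.cast_sub (by omega : 1 ≤ b)]; ring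
      rw [this]; ring
    rw [h2] at h1
    rw [h1]
  have hb1 : b - 1 + 1 = b := by omega
  have L1 : ∑ a ∈ (Finset.range b).erase 0, ((a:ℝ) + x)⁻¹
      = ∑ k ∈ Finset.range (b-1), 1/(x + 1 + k) := by
    have h0 : (0:ℕ) ∈ Finset.range b := Finset.mem_range.mpr (by omega)
    have h1 := Finset.sum_range_succ' (fun a : ℕ => ((a:ℝ) + x)⁻¹) (b-1)
    rw [hb1] at h1
    have h2 := Finset.sum_erase_add (Finset.range b) (fun a : ℕ => ((a:ℝ) + x)⁻¹) h0
    have h3 : ∑ k ∈ Finset.range (b-1), ((((k:ℕ)+1:ℕ):ℝ) + x)⁻¹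
        = ∑ k ∈ Finset.range (b-1), 1/(x + 1 + k) := by
      apply Finset.sum_congr rfl; intro k _
      rw [inv_eq_one_div]
      congr 1
      push_cast; ring
    push_cast at h1 h2 h3 ⊢
    rw [← h3]
    push_cast
    linarith [h1, h2]
  have L2 : ∑ a ∈ ((Finset.range b).erase d).erase 0, ((a:ℝ) + x)⁻¹
      = (∑ k ∈ Finset.range (b-1), 1/(x + 1 + k)) - ((d:ℝ) + x)⁻¹ := by
    rw [Finset.erase_right_comm]
    have hdmem' : d ∈ (Finset.range b).erase 0 := Finset.mem_erase.mpr ⟨by omega, hdmem⟩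
    have h2 := Finset.sum_erase_add ((Finset.range b).erase 0) (fun a : ℕ => ((a:ℝ) + x)⁻¹) hdmem'
    rw [← L1]
    linarith [h2]
  have E2' : digamma (((d:ℝ) + x)/b + 1) = digamma (((d:ℝ) + x)/b) + b/((d:ℝ) + x) := by
    rw [digamma_rec (by positivity), one_div_div]
  have hcomm : (x + (d:ℝ))/b = ((d:ℝ) + x)/b := by ring
  rw [L2, E1', E2, E3, hcomm]
  field_simp
  ring


variable (b d : ℕ)

/-- Admissible digits: elements of `Fin b` different from `d`. -/
def Dg := {j : Fin b // (j : ℕ) ≠ d}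

instance : Fintype (Dg b d) := by unfold Dg; infer_instance
instance : DecidableEq (Dg b d) := by unfold Dg; infer_instance

/-- Digit list of a string. -/
def dl (t : List (Dg b d)) : List ℕ := t.map (fun j => (j.1 : ℕ))

lemma dl_length (t : List (Dg b d)) : (dl b d t).length = t.length := List.length_map _

/-- weight `b^{-length}` -/
noncomputable def wt (t : List (Dg b d)) : ℝ := ((b:ℝ) ^ t.length)⁻¹

/-- value `0.t` -/
noncomputable def xv (t : List (Dg b d)) : ℝ :=
  ((Nat.ofDigits b (dl b d t) : ℕ) : ℝ) / (b:ℝ) ^ t.length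

variable {b d}

lemma dl_lt {t : List (Dg b d)} : ∀ u ∈ dl b d t, u < b := by
  intro u hu
  rcases List.mem_map.mp hu with ⟨j, _, rfl⟩
  exact j.1.isLt

lemma dl_ne {t : List (Dg b d)} : ∀ u ∈ dl b d t, u ≠ d := by
  intro u hu
  rcases List.mem_map.mp hu with ⟨j, _, rfl⟩
  exact j.2


lemma wt_pos (hb : 0 < b) (t : List (Dg b d)) : 0 < wt b d t := by
  have : (0:ℝ) < b := by exact_mod_cast hb
  unfold wt; positivity

lemma xv_nonneg (hb : 0 < b) (t : List (Dg b d)) : 0 ≤ xv b d t := by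
  have : (0:ℝ) < b := by exact_mod_cast hb
  unfold xv; positivity

lemma xv_lt_one (hb : 1 < b) (t : List (Dg b d)) : xv b d t < 1 := by
  have hbR : (0:ℝ) < b := by exact_mod_cast Nat.lt_of_lt_of_le Nat.zero_lt_one hb.le
  have h1 : Nat.ofDigits b (dl b d t) < b ^ t.length := by
    have := Nat.ofDigits_lt_base_pow_length hb (dl_lt (t := t))
    rwa [dl_length] at this
  rw [xv, div_lt_one (by positivity)]
  calc ((Nat.ofDigits b (dl b d t) : ℕ) : ℝ) < ((b ^ t.length : ℕ) : ℝ) := by exact_mod_cast h1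
  _ = (b:ℝ) ^ t.length := by push_cast; ring

lemma card_Dg (hdb : d < b) : Fintype.card (Dg b d) = b - 1 := by
  have h1 : Fintype.card (Dg b d) = Fintype.card (Fin b) - Fintype.card {j : Fin b // (j:ℕ) = d} := by
    unfold Dg
    rw [← Fintype.card_subtype_compl]
  have h2 : Fintype.card {j : Fin b // (j:ℕ) = d} = 1 := by
    rw [Fintype.card_eq_one_iff]
    refine ⟨⟨⟨d, hdb⟩, rfl⟩, ?_⟩
    rintro ⟨⟨j, hj⟩, hjd⟩
    simp only [Subtype.ext_iff, Fin.ext_iff]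
    exact hjd
  rw [h1, h2, Fintype.card_fin]

lemma summable_wt_aux (hb : 1 < b) (hdb : d < b) :
    Summable (fun t : List (Dg b d) => wt b d t) ∧
      ∑' t : List (Dg b d), wt b d t = (b:ℝ) := by
  have hbR : (0:ℝ) < b := by positivity
  set r : ℝ := ((b:ℝ) - 1)/b with hr
  have hr0 : 0 ≤ r := by
    apply div_nonneg _ hbR.le
    have : (1:ℝ) ≤ b := by exact_mod_cast hb.le
    linarith
  have hr1 : r < 1 := by
    rw [hr, div_lt_one hbR]; linarith
  set F : (Σ n : ℕ, Fin n → Dg b d) → ℝ := fun p => ((b:ℝ) ^ p.1)⁻¹ with hF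
  have hFnonneg : ∀ p, 0 ≤ F p := fun p => by positivity
  have hfiber : ∀ n : ℕ, ∑' v : Fin n → Dg b d, ((b:ℝ) ^ n)⁻¹ = r ^ n := by
    intro n
    rw [tsum_fintype, Finset.sum_const, Finset.card_univ, nsmul_eq_mul, Fintype.card_fun,
      card_Dg hdb, Fintype.card_fin]
    rw [hr, div_pow, Nat.cast_pow]
    have hc : ((b - 1 : ℕ) : ℝ) = (b:ℝ) - 1 := by
      push_cast [Nat.cast_sub (by omega : 1 ≤ b)]; ring
    rw [hc]
    ring
  have hFs : Summable F := by
    rw [summable_sigma_of_nonneg hFnonneg]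
    refine ⟨fun n => Summable.of_finite, ?_⟩
    exact (summable_geometric_of_lt_one hr0 hr1).congr (fun n => (hfiber n).symm)
  have hkey : ∀ p : (Σ n : ℕ, Fin n → Dg b d), wt b d ((List.equivSigmaTuple (α := Dg b d)).symm p) = F p := by
    rintro ⟨n, v⟩
    simp only [List.equivSigmaTuple, Equiv.coe_fn_symm_mk, wt, List.length_ofFn, hF]
  have hsum : Summable (fun t : List (Dg b d) => wt b d t) := by
    have h2 : Summable (fun p => wt b d ((List.equivSigmaTuple (α := Dg b d)).symm p)) :=
      hFs.congr (fun p => (hkey p).symm)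
    exact (Equiv.summable_iff (List.equivSigmaTuple (α := Dg b d)).symm).mp h2
  refine ⟨hsum, ?_⟩
  have h1 : ∑' t : List (Dg b d), wt b d t
      = ∑' p : (Σ n : ℕ, Fin n → Dg b d), wt b d ((List.equivSigmaTuple (α := Dg b d)).symm p) :=
    (Equiv.tsum_eq (List.equivSigmaTuple (α := Dg b d)).symm _).symm
  rw [h1, tsum_congr hkey, Summable.tsum_sigma' (fun n => Summable.of_finite) hFs]
  rw [tsum_congr (fun n => hfiber n), tsum_geometric_of_lt_one hr0 hr1]
  rw [hr]
  rw [show (1:ℝ) - ((b:ℝ)-1)/b = 1/b by field_simp; ring]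
  simp

lemma summable_bdd (hb : 1 < b) (hdb : d < b) {g : ℝ → ℝ} {C : ℝ}
    (hg : ∀ x : ℝ, 0 ≤ x → x < 1 → |g x| ≤ C) :
    Summable (fun t : List (Dg b d) => wt b d t * g (xv b d t)) := by
  have hb0 : 0 < b := by omega
  apply Summable.of_norm_bounded
    (((summable_wt_aux hb hdb).1).mul_left C)
  intro t
  rw [Real.norm_eq_abs, abs_mul, abs_of_pos (wt_pos hb0 t)]
  calc wt b d t * |g (xv b d t)|
      ≤ wt b d t * C :=
        mul_le_mul_of_nonneg_left (hg _ (xv_nonneg hb0 t) (xv_lt_one hb t)) (wt_pos hb0 t).le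
  _ = C * wt b d t := mul_comm _ _

lemma tsum_wt_const (hb : 1 < b) (hdb : d < b) (c : ℝ) :
    ∑' t : List (Dg b d), wt b d t * c = b * c := by
  rw [tsum_mul_right, (summable_wt_aux hb hdb).2]

lemma tsum_split (hb : 1 < b) (hdb : d < b) {f : List (Dg b d) → ℝ} (hf : Summable f) :
    ∑' t : List (Dg b d), f t
      = f [] + ∑ a : Dg b d, ∑' t : List (Dg b d), f (t ++ [a]) := by
  classical
  set i : Dg b d × List (Dg b d) → List (Dg b d) := fun p => p.2 ++ [p.1] with hi_def
  have hi : Function.Injective i := by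
    rintro ⟨a1, t1⟩ ⟨a2, t2⟩ h
    simp only [hi_def] at h
    rcases List.append_inj' h (by simp) with ⟨ht, ha⟩
    simp only [List.cons.injEq, and_true] at ha
    exact Prod.ext (by simpa using ha) (by simpa using ht)
  set f0 : List (Dg b d) → ℝ := fun t => if t = [] then 0 else f t with hf0_def
  have hsingle : Summable (fun t : List (Dg b d) => if t = [] then f t else 0) := by
    apply summable_of_ne_finset_zero (s := {([] : List (Dg b d))})
    intro t ht
    simp only [Finset.mem_singleton] at ht
    simp [ht]
  have hf0 : Summable f0 := by
    apply (hf.sub hsingle).congr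
    intro t
    by_cases h : t = [] <;> simp [hf0_def, h]
  have hsupp : ∀ x ∉ Set.range i, f0 x = 0 := by
    intro t ht
    rcases t.eq_nil_or_concat' with rfl | ⟨L, a, rfl⟩
    · simp [hf0_def]
    · exact absurd ⟨(a, L), rfl⟩ ht
  have h3 : ∀ p : Dg b d × List (Dg b d), f0 (i p) = f (p.2 ++ [p.1]) := by
    intro p
    have : p.2 ++ [p.1] ≠ [] := by simp
    simp [hf0_def, hi_def, this]
  have hps : Summable (fun p : Dg b d × List (Dg b d) => f (p.2 ++ [p.1])) := by
    have h4 : Summable (f0 ∘ i) := (hi.summable_iff hsupp).mpr hf0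
    exact h4.congr h3
  have h2 : ∑' p : Dg b d × List (Dg b d), f0 (i p) = ∑' t, f0 t := hi.tsum_eq (by
    intro t ht
    by_contra hcon
    exact ht (hsupp t hcon))
  rw [Summable.tsum_eq_add_tsum_ite hf ([] : List (Dg b d))]
  congr 1
  have h5 : ∑' t : List (Dg b d), (if t = [] then 0 else f t) = ∑' t, f0 t := rfl
  rw [h5, ← h2, tsum_congr h3, Summable.tsum_prod' hps hps.prod_factor, tsum_fintype]

variable (b d)

/-- Admissible nonzero digits. -/
def Dg0 := {j : Fin b // (j : ℕ) ≠ d ∧ (j : ℕ) ≠ 0}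

instance : Fintype (Dg0 b d) := by unfold Dg0; infer_instance

/-- The number with fractional string `t` and leading digit `a`. -/
def nu (p : Dg0 b d × List (Dg b d)) : ℕ :=
  Nat.ofDigits b (dl b d p.2 ++ [((p.1.1 : ℕ))])

variable {b d}

lemma nu_eq (p : Dg0 b d × List (Dg b d)) :
    nu b d p = Nat.ofDigits b (dl b d p.2) + b ^ p.2.length * (p.1.1 : ℕ) := by
  rw [nu, Nat.ofDigits_append, Nat.ofDigits_singleton, dl_length]

lemma nu_pos (hb : 1 < b) (p : Dg0 b d × List (Dg b d)) : 0 < nu b d p := by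
  rw [nu_eq]
  have h1 : 0 < b ^ p.2.length := Nat.pow_pos (by omega)
  have h2 : 0 < (p.1.1 : ℕ) := Nat.pos_of_ne_zero p.1.2.2
  have := Nat.mul_pos h1 h2
  omega

lemma digits_nu (hb : 1 < b) (p : Dg0 b d × List (Dg b d)) :
    Nat.digits b (nu b d p) = dl b d p.2 ++ [(p.1.1 : ℕ)] := by
  apply Nat.digits_ofDigits b hb
  · intro u hu
    rcases List.mem_append.mp hu with h | h
    · exact dl_lt u h
    · simp only [List.mem_singleton] at h
      subst h; exact p.1.1.isLt
  · intro h
    rw [List.getLast_append]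
    exact p.1.2.2

lemma nu_injective (hb : 1 < b) : Function.Injective (nu b d) := by
  intro p q h
  have hd1 := digits_nu hb p
  have hd2 := digits_nu hb q
  rw [h, hd2] at hd1
  rcases List.append_inj' hd1.symm (by simp) with ⟨ht, ha⟩
  have hdl_inj : Function.Injective (fun j : Dg b d => (j.1 : ℕ)) := by
    intro x y hxy
    exact Subtype.ext (Fin.ext hxy)
  have ht' : p.2 = q.2 := List.map_injective_iff.mpr hdl_inj ht
  have ha' : p.1 = q.1 := by
    simp only [List.cons.injEq, and_true] at ha
    exact Subtype.ext (Fin.ext ha)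
  exact Prod.ext ha' ht'

lemma kempner_eq (hb : 1 < b) (hd0 : 0 < d) (hdb : d < b) :
    kempnerSum b {d} = ∑' p : Dg0 b d × List (Dg b d), ((nu b d p : ℕ) : ℝ)⁻¹ := by
  classical
  set fK : ℕ → ℝ := fun n =>
    if n ≠ 0 ∧ ∀ u ∈ Nat.digits b n, u ∉ ({d} : Finset ℕ) then (n : ℝ)⁻¹ else 0 with hfK
  have hsupp : ∀ n ∉ Set.range (nu b d), fK n = 0 := by
    intro n hn
    by_contra hcon
    apply hn
    have hcond : n ≠ 0 ∧ ∀ u ∈ Nat.digits b n, u ∉ ({d} : Finset ℕ) := by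
      by_contra hc
      simp only [hfK, if_neg hc] at hcon
      exact hcon trivial
    obtain ⟨hn0, hdig⟩ := hcond
    set L : List ℕ := Nat.digits b n with hL_def
    have hL : L ≠ [] := Nat.digits_ne_nil_iff_ne_zero.mpr hn0
    have hlt : ∀ u ∈ L, u < b := fun u hu => Nat.digits_lt_base hb hu
    have hne : ∀ u ∈ L, u ≠ d := by
      intro u hu
      have := hdig u hu
      simpa using this
    have hamem : L.getLast hL ∈ L := List.getLast_mem hL
    have ha0 : L.getLast hL ≠ 0 := Nat.getLast_digit_ne_zero b hn0
    set t : List (Dg b d) := L.dropLast.attach.map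
      (fun u => (⟨⟨u.1, hlt _ (List.dropLast_subset _ u.2)⟩,
        hne _ (List.dropLast_subset _ u.2)⟩ : Dg b d)) with ht_def
    have hdl : dl b d t = L.dropLast := by
      simp only [dl, ht_def, List.map_map, Function.comp_def]
      exact List.map_map.trans (List.attach_map_subtype_val _)
    set a : Dg0 b d := ⟨⟨L.getLast hL, hlt _ hamem⟩, hne _ hamem, ha0⟩ with ha_def
    refine ⟨(a, t), ?_⟩
    show Nat.ofDigits b (dl b d t ++ [(a.1 : ℕ)]) = n
    rw [hdl]
    show Nat.ofDigits b (L.dropLast ++ [L.getLast hL]) = n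
    rw [List.dropLast_append_getLast hL]
    exact Nat.ofDigits_digits b n
  have h1 : ∑' p : Dg0 b d × List (Dg b d), fK (nu b d p) = ∑' n, fK n := by
    apply (nu_injective hb).tsum_eq
    intro n hn
    by_contra hcon
    exact hn (hsupp n hcon)
  have h2 : ∀ p : Dg0 b d × List (Dg b d), fK (nu b d p) = ((nu b d p : ℕ) : ℝ)⁻¹ := by
    intro p
    rw [hfK]
    simp only
    rw [if_pos]
    refine ⟨(nu_pos hb p).ne', ?_⟩
    intro u hu
    rw [digits_nu hb p] at hu
    simp only [Finset.mem_singleton]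
    rcases List.mem_append.mp hu with h | h
    · exact dl_ne u h
    · simp only [List.mem_singleton] at h
      subst h; exact p.1.2.1
  rw [kempnerSum, ← h1, tsum_congr h2]

lemma nu_inv_eq (hb : 1 < b) (p : Dg0 b d × List (Dg b d)) :
    ((nu b d p : ℕ) : ℝ)⁻¹ = wt b d p.2 * (((p.1.1 : ℕ) : ℝ) + xv b d p.2)⁻¹ := by
  have hbR : (0:ℝ) < b := by positivity
  have hB : (0:ℝ) < (b:ℝ) ^ p.2.length := by positivity
  rw [nu_eq, wt, xv, ← mul_inv]
  congr 1
  push_cast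
  field_simp
  ring

lemma wt_append (hb : 0 < b) (t : List (Dg b d)) (a : Dg b d) :
    wt b d (t ++ [a]) = wt b d t * (1/b) := by
  have hbR : (0:ℝ) < b := by exact_mod_cast hb
  rw [wt, wt, List.length_append, List.length_singleton, pow_succ, mul_inv]
  ring

lemma xv_append (hb : 0 < b) (t : List (Dg b d)) (a : Dg b d) :
    xv b d (t ++ [a]) = (xv b d t + ((a.1 : ℕ) : ℝ))/b := by
  have hbR : (0:ℝ) < b := by exact_mod_cast hb
  have hB : (0:ℝ) < (b:ℝ) ^ t.length := by positivity
  have hnat : Nat.ofDigits b (dl b d (t ++ [a])) = Nat.ofDigits b (dl b d t) + b ^ t.length * (a.1 : ℕ) := by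
    simp only [dl, List.map_append, List.map_cons, List.map_nil, Nat.ofDigits_append,
      Nat.ofDigits_singleton, List.length_map]
  rw [xv, xv, hnat, List.length_append, List.length_singleton]
  push_cast
  rw [pow_succ]
  field_simp

lemma structural (hb : 1 < b) (hdb : d < b) {g : ℝ → ℝ} {C : ℝ}
    (hg : ∀ x : ℝ, 0 ≤ x → x < 1 → |g x| ≤ C) :
    ∑' t : List (Dg b d), wt b d t * g (xv b d t)
      = g 0 + (1/b) * ∑ a : Dg b d, ∑' t : List (Dg b d),
          wt b d t * g ((xv b d t + ((a.1 : ℕ) : ℝ))/b) := by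
  have hb0 : 0 < b := by omega
  rw [tsum_split hb hdb (summable_bdd hb hdb hg)]
  congr 1
  · simp [wt, xv, dl, Nat.ofDigits]
  · rw [Finset.mul_sum]
    apply Finset.sum_congr rfl
    intro a _
    rw [← tsum_mul_left]
    apply tsum_congr; intro t
    rw [wt_append hb0, xv_append hb0]
    ring

/-- kempnerSum as a sum over strings of `wt * F(xv)` where
`F x = ∑ admissible nonzero digits a, 1/(a+x)`. -/
lemma kempner_eq_F (hb : 2 < b) (hd0 : 0 < d) (hdb : d < b) :
    kempnerSum b {d}
      = ∑' t : List (Dg b d), wt b d t *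
          (∑ a : Dg0 b d, (((a.1.1 : ℕ) : ℝ) + xv b d t)⁻¹) := by
  have hb1 : 1 < b := by omega
  have hb0 : 0 < b := by omega
  have hbR : (0:ℝ) < b := by positivity
  have hbound : ∀ a : Dg0 b d, ∀ x : ℝ, 0 ≤ x → x < 1 →
      |(((a.1.1 : ℕ) : ℝ) + x)⁻¹| ≤ 1 := by
    intro a x hx0 hx1
    have ha1 : (1:ℝ) ≤ ((a.1.1 : ℕ) : ℝ) := by
      have : 1 ≤ (a.1.1 : ℕ) := Nat.pos_of_ne_zero a.2.2
      exact_mod_cast this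
    rw [abs_of_pos (by positivity)]
    rw [inv_le_one_iff₀]
    right
    linarith
  have hslice : ∀ a : Dg0 b d,
      Summable (fun t : List (Dg b d) => wt b d t * (((a.1.1 : ℕ) : ℝ) + xv b d t)⁻¹) := by
    intro a
    exact summable_bdd hb1 hdb (g := fun x => (((a.1.1 : ℕ) : ℝ) + x)⁻¹) (hbound a)
  have hprod : Summable (fun p : Dg0 b d × List (Dg b d) =>
      wt b d p.2 * (((p.1.1.1 : ℕ) : ℝ) + xv b d p.2)⁻¹) := by
    rw [summable_prod_of_nonneg]
    · refine ⟨fun a => hslice a, Summable.of_finite⟩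
    · intro p
      have h1 : (0:ℝ) < ((p.1.1.1 : ℕ) : ℝ) + xv b d p.2 := by
        have : 1 ≤ (p.1.1.1 : ℕ) := Nat.pos_of_ne_zero p.1.2.2
        have h2 : (1:ℝ) ≤ ((p.1.1.1 : ℕ) : ℝ) := by exact_mod_cast this
        have := xv_nonneg hb0 p.2
        linarith
      have := wt_pos hb0 p.2
      positivity
  rw [kempner_eq hb1 hd0 hdb, tsum_congr (nu_inv_eq hb1), Summable.tsum_prod' hprod hprod.prod_factor,
    tsum_fintype]
  rw [← Summable.tsum_finsetSum (fun a _ => hslice a)]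
  apply tsum_congr; intro t
  rw [Finset.mul_sum]

lemma xv_nil {b d : ℕ} : xv b d ([] : List (Dg b d)) = 0 := by
  simp [xv, dl, Nat.ofDigits_nil]

lemma xv_single {b d : ℕ} (j : Dg b d) : xv b d [j] = ((j.1 : ℕ) : ℝ)/(b:ℝ) := by
  simp [xv, dl, Nat.ofDigits_singleton]

end KP

namespace KP2
open KP

lemma sum_Dg_eq {b d : ℕ} (hdb : d < b) (h : ℕ → ℝ) :
    ∑ j : Dg b d, h (j.1 : ℕ) = ∑ j ∈ (Finset.range b).erase d, h j := by
  have hmem : ∀ u ∈ (Finset.range b).erase d, u < b ∧ u ≠ d := fun u hu =>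
    ⟨Finset.mem_range.mp (Finset.mem_of_mem_erase hu), Finset.ne_of_mem_erase hu⟩
  refine Finset.sum_bij' (i := fun (a : Dg b d) (_ : a ∈ Finset.univ) => (a.1 : ℕ))
    (j := fun u hu => (⟨⟨u, (hmem u hu).1⟩, (hmem u hu).2⟩ : Dg b d)) ?_ ?_ ?_ ?_ ?_
  · intro a _
    exact Finset.mem_erase.mpr ⟨a.2, Finset.mem_range.mpr a.1.isLt⟩
  · intro u hu
    exact Finset.mem_univ _
  · intro a _
    exact Subtype.ext (Fin.ext rfl)
  · intro u hu
    rfl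
  · intro a _
    rfl

lemma sum_Dg0_eq {b d : ℕ} (hdb : d < b) (h : ℕ → ℝ) :
    ∑ a : Dg0 b d, h (a.1 : ℕ) = ∑ a ∈ ((Finset.range b).erase d).erase 0, h a := by
  have hmem : ∀ u ∈ ((Finset.range b).erase d).erase 0, u < b ∧ u ≠ d ∧ u ≠ 0 := fun u hu =>
    ⟨Finset.mem_range.mp (Finset.mem_of_mem_erase (Finset.mem_of_mem_erase hu)),
      Finset.ne_of_mem_erase (Finset.mem_of_mem_erase hu), Finset.ne_of_mem_erase hu⟩
  refine Finset.sum_bij' (i := fun (a : Dg0 b d) (_ : a ∈ Finset.univ) => (a.1 : ℕ))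
    (j := fun u hu => (⟨⟨u, (hmem u hu).1⟩, (hmem u hu).2.1, (hmem u hu).2.2⟩ : Dg0 b d)) ?_ ?_ ?_ ?_ ?_
  · intro a _
    exact Finset.mem_erase.mpr ⟨a.2.2, Finset.mem_erase.mpr ⟨a.2.1, Finset.mem_range.mpr a.1.isLt⟩⟩
  · intro u hu
    exact Finset.mem_univ _
  · intro a _
    exact Subtype.ext (Fin.ext rfl)
  · intro u hu
    rfl
  · intro a _
    rfl

end KP2

open KP KP2

theorem kempner_single_digit_bounds (b : ℕ) (hb : 2 < b) (d : ℕ)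
    (hd0 : 0 < d) (hdb : d < b) :
    (b : ℝ) * Real.log b + digamma ((d : ℝ) / b) - digamma 1 < kempnerSum b {d} ∧
    kempnerSum b {d} < (b : ℝ) * Real.log b + digamma (((d : ℝ) + 1) / b) - digamma 1 := by
  have hb1 : 1 < b := by omega
  have hb0 : 0 < b := by omega
  have hbR : (0:ℝ) < b := by positivity
  have hdR : (0:ℝ) < d := by exact_mod_cast hd0
  have habs : ∀ {lo hi v : ℝ}, lo ≤ v → v ≤ hi → |v| ≤ |lo| + |hi| := by
    intro lo hi v h1 h2
    rw [abs_le]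
    constructor
    · have h3 := neg_abs_le lo; have h4 := abs_nonneg hi; linarith
    · have h3 := le_abs_self hi; have h4 := abs_nonneg lo; linarith
  -- bound for g1 = fun x => digamma (x+1)
  have hg1b : ∀ x : ℝ, 0 ≤ x → x < 1 → |digamma (x + 1)| ≤ |digamma 1| + |digamma 2| := by
    intro x h0 h1
    refine habs ?_ ?_
    · exact digamma_mono one_pos (by linarith)
    · exact digamma_mono (by linarith) (by linarith)
  have hC1 : (0:ℝ) ≤ |digamma 1| + |digamma 2| := by positivity
  -- per-digit shifted bound
  have hjlt : ∀ j : Dg b d, ((j.1 : ℕ) : ℝ) + 1 ≤ b := by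
    intro j
    have : (j.1 : ℕ) + 1 ≤ b := j.1.isLt
    exact_mod_cast this
  have hjnn : ∀ j : Dg b d, (0:ℝ) ≤ ((j.1 : ℕ) : ℝ) := fun j => Nat.cast_nonneg _
  have hg1j : ∀ j : Dg b d, ∀ x : ℝ, 0 ≤ x → x < 1 →
      |digamma ((x + ((j.1 : ℕ) : ℝ))/b + 1)| ≤ |digamma 1| + |digamma 2| := by
    intro j x h0 h1
    apply hg1b
    · positivity
    · rw [div_lt_one hbR]
      have := hjlt j
      linarith
  -- bound for the composite function gc
  have hgcb : ∀ x : ℝ, 0 ≤ x → x < 1 →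
      |(1/(b:ℝ)) * ∑ j : Dg b d, digamma ((x + ((j.1 : ℕ) : ℝ))/b + 1)|
        ≤ |digamma 1| + |digamma 2| := by
    intro x h0 h1
    rw [abs_mul, abs_of_pos (by positivity : (0:ℝ) < 1/(b:ℝ))]
    have h2 : |∑ j : Dg b d, digamma ((x + ((j.1 : ℕ) : ℝ))/b + 1)|
        ≤ (b:ℝ) * (|digamma 1| + |digamma 2|) := by
      calc |∑ j : Dg b d, digamma ((x + ((j.1 : ℕ) : ℝ))/b + 1)|
          ≤ ∑ j : Dg b d, |digamma ((x + ((j.1 : ℕ) : ℝ))/b + 1)| :=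
            Finset.abs_sum_le_sum_abs _ _
        _ ≤ ∑ _j : Dg b d, (|digamma 1| + |digamma 2|) :=
            Finset.sum_le_sum (fun j _ => hg1j j x h0 h1)
        _ = (Fintype.card (Dg b d) : ℝ) * (|digamma 1| + |digamma 2|) := by
            rw [Finset.sum_const, Finset.card_univ, nsmul_eq_mul]
        _ ≤ (b:ℝ) * (|digamma 1| + |digamma 2|) := by
            apply mul_le_mul_of_nonneg_right _ hC1
            rw [card_Dg hdb]
            have : ((b-1:ℕ):ℝ) ≤ (b:ℕ) := by exact_mod_cast Nat.sub_le b 1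
            exact this
    calc (1/(b:ℝ)) * |∑ j : Dg b d, digamma ((x + ((j.1 : ℕ) : ℝ))/b + 1)|
        ≤ (1/(b:ℝ)) * ((b:ℝ) * (|digamma 1| + |digamma 2|)) := by
          apply mul_le_mul_of_nonneg_left h2 (by positivity)
      _ = |digamma 1| + |digamma 2| := by field_simp
  -- bound for gd
  have hgdb : ∀ x : ℝ, 0 ≤ x → x < 1 →
      |digamma (((d:ℝ) + x)/b)| ≤ |digamma ((d:ℝ)/b)| + |digamma (((d:ℝ)+1)/b)| := by
    intro x h0 h1
    refine habs ?_ ?_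
    · apply digamma_mono (div_pos hdR hbR)
      gcongr <;> linarith
    · apply digamma_mono (div_pos (by linarith) hbR)
      gcongr <;> linarith
  -- summability of the pieces
  have sPsi : Summable (fun t : List (Dg b d) => wt b d t * digamma (xv b d t + 1)) :=
    summable_bdd hb1 hdb (g := fun x => digamma (x + 1)) hg1b
  have s1 : Summable (fun t : List (Dg b d) => wt b d t * -digamma (xv b d t + 1)) := by
    apply sPsi.neg.congr
    intro t; ring
  have s2 : Summable (fun t : List (Dg b d) => wt b d t *
      ((1/(b:ℝ)) * ∑ j : Dg b d, digamma ((xv b d t + ((j.1 : ℕ) : ℝ))/b + 1))) :=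
    summable_bdd hb1 hdb
      (g := fun x => (1/(b:ℝ)) * ∑ j : Dg b d, digamma ((x + ((j.1 : ℕ) : ℝ))/b + 1)) hgcb
  have s3 : Summable (fun t : List (Dg b d) => wt b d t * Real.log b) :=
    (summable_wt_aux hb1 hdb).1.mul_right _
  have sR : Summable (fun t : List (Dg b d) => wt b d t * digamma (((d:ℝ) + xv b d t)/b)) :=
    summable_bdd hb1 hdb (g := fun x => digamma (((d:ℝ) + x)/b)) hgdb
  have s4 : Summable (fun t : List (Dg b d) => wt b d t *
      ((1/(b:ℝ)) * digamma (((d:ℝ) + xv b d t)/b))) := by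
    apply (sR.mul_left (1/(b:ℝ))).congr
    intro t; ring
  -- the key pointwise rewrite
  have hkey : ∀ t : List (Dg b d),
      (∑ a : Dg0 b d, (((a.1.1 : ℕ) : ℝ) + xv b d t)⁻¹)
      = -digamma (xv b d t + 1)
        + (1/(b:ℝ)) * ∑ j : Dg b d, digamma ((xv b d t + ((j.1 : ℕ) : ℝ))/b + 1)
        + Real.log b + (1/(b:ℝ)) * digamma (((d:ℝ) + xv b d t)/b) := by
    intro t
    have h0 := xv_nonneg hb0 t
    have hkp := key_pointwise hb hd0 hdb h0
    rw [sum_Dg0_eq hdb (fun u => ((u:ℝ) + xv b d t)⁻¹),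
      sum_Dg_eq hdb (fun u => digamma ((xv b d t + (u:ℝ))/b + 1))]
    exact hkp
  have hK : kempnerSum b {d} = ∑' t : List (Dg b d),
      ((wt b d t * -digamma (xv b d t + 1)
        + wt b d t * ((1/(b:ℝ)) * ∑ j : Dg b d, digamma ((xv b d t + ((j.1 : ℕ) : ℝ))/b + 1))
        + wt b d t * Real.log b)
        + wt b d t * ((1/(b:ℝ)) * digamma (((d:ℝ) + xv b d t)/b))) := by
    rw [kempner_eq_F hb hd0 hdb]
    apply tsum_congr
    intro t
    rw [hkey t]
    ring
  -- split into four sums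
  have hsplit : kempnerSum b {d}
      = (∑' t : List (Dg b d), wt b d t * -digamma (xv b d t + 1))
        + (∑' t : List (Dg b d), wt b d t *
            ((1/(b:ℝ)) * ∑ j : Dg b d, digamma ((xv b d t + ((j.1 : ℕ) : ℝ))/b + 1)))
        + (∑' t : List (Dg b d), wt b d t * Real.log b)
        + (∑' t : List (Dg b d), wt b d t * ((1/(b:ℝ)) * digamma (((d:ℝ) + xv b d t)/b))) := by
    rw [hK, Summable.tsum_add ((s1.add s2).add s3) s4, Summable.tsum_add (s1.add s2) s3, Summable.tsum_add s1 s2]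
  -- evaluate the pieces
  set Psi : ℝ := ∑' t : List (Dg b d), wt b d t * digamma (xv b d t + 1) with hPsi
  set R : ℝ := ∑' t : List (Dg b d), wt b d t * digamma (((d:ℝ) + xv b d t)/b) with hR
  have e1 : ∑' t : List (Dg b d), wt b d t * -digamma (xv b d t + 1) = -Psi := by
    rw [hPsi, ← tsum_neg]
    apply tsum_congr; intro t; ring
  have e2 : ∑' t : List (Dg b d), wt b d t *
      ((1/(b:ℝ)) * ∑ j : Dg b d, digamma ((xv b d t + ((j.1 : ℕ) : ℝ))/b + 1))
      = Psi - digamma 1 := by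
    have hstruct := structural hb1 hdb (g := fun x => digamma (x + 1)) hg1b
    have hsj : ∀ j : Dg b d, Summable (fun t : List (Dg b d) =>
        wt b d t * digamma ((xv b d t + ((j.1 : ℕ) : ℝ))/b + 1)) := by
      intro j
      exact summable_bdd hb1 hdb (g := fun x => digamma ((x + ((j.1 : ℕ) : ℝ))/b + 1)) (hg1j j)
    have h6 : ∑' t : List (Dg b d), wt b d t *
        ((1/(b:ℝ)) * ∑ j : Dg b d, digamma ((xv b d t + ((j.1 : ℕ) : ℝ))/b + 1))
        = ∑' t : List (Dg b d), ∑ j : Dg b d,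
            (1/(b:ℝ)) * (wt b d t * digamma ((xv b d t + ((j.1 : ℕ) : ℝ))/b + 1)) := by
      apply tsum_congr; intro t
      rw [Finset.mul_sum, Finset.mul_sum]
      apply Finset.sum_congr rfl; intro j _; ring
    rw [h6, Summable.tsum_finsetSum (fun j _ => (hsj j).mul_left (1/(b:ℝ)))]
    have h7 : ∀ j : Dg b d, ∑' t : List (Dg b d),
        (1/(b:ℝ)) * (wt b d t * digamma ((xv b d t + ((j.1 : ℕ) : ℝ))/b + 1))
        = (1/(b:ℝ)) * ∑' t : List (Dg b d),
            wt b d t * digamma ((xv b d t + ((j.1 : ℕ) : ℝ))/b + 1) := by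
      intro j; rw [tsum_mul_left]
    rw [Finset.sum_congr rfl (fun j _ => h7 j), ← Finset.mul_sum]
    have h8 : Psi = digamma (0 + 1) + (1/(b:ℝ)) * ∑ a : Dg b d, ∑' t : List (Dg b d),
        wt b d t * digamma ((xv b d t + ((a.1 : ℕ) : ℝ))/b + 1) := hstruct
    rw [zero_add] at h8
    linarith
  have e3 : ∑' t : List (Dg b d), wt b d t * Real.log b = b * Real.log b :=
    tsum_wt_const hb1 hdb _
  have e4 : ∑' t : List (Dg b d), wt b d t * ((1/(b:ℝ)) * digamma (((d:ℝ) + xv b d t)/b))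
      = (1/(b:ℝ)) * R := by
    rw [hR, ← tsum_mul_left]
    apply tsum_congr; intro t; ring
  have hKval : kempnerSum b {d} = -Psi + (Psi - digamma 1) + b * Real.log b + (1/(b:ℝ)) * R := by
    rw [hsplit, e1, e2, e3, e4]
  -- bounds on R
  have hterm_low : ∀ t : List (Dg b d),
      wt b d t * digamma ((d:ℝ)/b) ≤ wt b d t * digamma (((d:ℝ) + xv b d t)/b) := by
    intro t
    apply mul_le_mul_of_nonneg_left _ (wt_pos hb0 t).le
    apply digamma_mono (div_pos hdR hbR)
    gcongr <;> linarith [xv_nonneg hb0 t]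
  have hterm_high : ∀ t : List (Dg b d),
      wt b d t * digamma (((d:ℝ) + xv b d t)/b) ≤ wt b d t * digamma (((d:ℝ)+1)/b) := by
    intro t
    apply mul_le_mul_of_nonneg_left _ (wt_pos hb0 t).le
    apply digamma_mono (div_pos (by linarith [xv_nonneg hb0 t]) hbR)
    gcongr <;> linarith [xv_lt_one hb1 t]
  obtain ⟨j0, hj0⟩ : ∃ j : Dg b d, 0 < (j.1 : ℕ) := by
    by_cases hd1 : d = 1
    · exact ⟨⟨⟨2, by omega⟩, show (2:ℕ) ≠ d by omega⟩, by norm_num⟩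
    · exact ⟨⟨⟨1, by omega⟩, show (1:ℕ) ≠ d by omega⟩, by norm_num⟩
  have hxvj : 0 < xv b d [j0] := by
    rw [xv_single]
    have : (0:ℝ) < ((j0.1 : ℕ) : ℝ) := by exact_mod_cast hj0
    positivity
  have hstrict_low : wt b d [j0] * digamma ((d:ℝ)/b)
      < wt b d [j0] * digamma (((d:ℝ) + xv b d [j0])/b) := by
    apply mul_lt_mul_of_pos_left _ (wt_pos hb0 _)
    apply digamma_strictMono (div_pos hdR hbR)
    gcongr <;> linarith
  have hstrict_high : wt b d [] * digamma (((d:ℝ) + xv b d [])/b)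
      < wt b d [] * digamma (((d:ℝ)+1)/b) := by
    apply mul_lt_mul_of_pos_left _ (wt_pos hb0 _)
    rw [xv_nil]
    apply digamma_strictMono (div_pos (by linarith) hbR)
    gcongr <;> linarith
  have hRlow : (b:ℝ) * digamma ((d:ℝ)/b) < R := by
    rw [← tsum_wt_const hb1 hdb (digamma ((d:ℝ)/b)), hR]
    exact Summable.tsum_lt_tsum hterm_low hstrict_low ((summable_wt_aux hb1 hdb).1.mul_right _) sR
  have hRhigh : R < (b:ℝ) * digamma (((d:ℝ)+1)/b) := by
    rw [← tsum_wt_const hb1 hdb (digamma (((d:ℝ)+1)/b)), hR]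
    exact Summable.tsum_lt_tsum hterm_high hstrict_high sR ((summable_wt_aux hb1 hdb).1.mul_right _)
  have hmul_low : digamma ((d:ℝ)/b) < (1/(b:ℝ)) * R := by
    have h9 := mul_lt_mul_of_pos_left hRlow (by positivity : (0:ℝ) < 1/(b:ℝ))
    have h10 : (1/(b:ℝ)) * ((b:ℝ) * digamma ((d:ℝ)/b)) = digamma ((d:ℝ)/b) := by
      field_simp
    linarith
  have hmul_high : (1/(b:ℝ)) * R < digamma (((d:ℝ)+1)/b) := by
    have h9 := mul_lt_mul_of_pos_left hRhigh (by positivity : (0:ℝ) < 1/(b:ℝ))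
    have h10 : (1/(b:ℝ)) * ((b:ℝ) * digamma (((d:ℝ)+1)/b)) = digamma (((d:ℝ)+1)/b) := by
      field_simp
    linarith
  constructor
  · linarith
  · linarith
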